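/- Let ≽ be a convex preorder on the positive roots Φ₊ of affine type A_{e-1}^{(1)}. Define a relation <* on [0,e−1] by: for i < j, set i <* j if α(i+1, j−i) ∈ Φ_{≻δ}, and j <* i if δ − α(i+1, j−i) ∈ Φ_{≻δ}. Then <* is a strict total order on [0,e−1]; in particular, <* is transitive. -/

import Mathlib

/-- The positive root `α(t,L) = α_{t̄} + ⋯ + α_{t̄+L-1}` of affine type `A_{e-1}^{(1)}`,
as an element of the root lattice `ZMod e → ℤ`. -/
def alphaRoot (e : ℕ) (t : ℤ) (L : ℕ) : ZMod e → ℤ := fun j =>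
  (((Finset.range L).filter (fun k : ℕ => ((t + (k : ℤ) : ℤ) : ZMod e) = j)).card : ℤ)

/-- The null root `δ = α_0 + α_1 + ⋯ + α_{e-1}`. -/
def deltaRoot (e : ℕ) : ZMod e → ℤ := fun _ => 1

/-- The set `Φ₊` of positive roots of affine type `A_{e-1}^{(1)}`. -/
def PhiPos (e : ℕ) : Set (ZMod e → ℤ) :=
  {β | ∃ t : ℤ, ∃ L : ℕ, 0 < L ∧ β = alphaRoot e t L}

/-- Imaginary roots: positive multiples of the null root `δ`. -/
def ImaginaryRoot (e : ℕ) (β : ZMod e → ℤ) : Prop :=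
  ∃ m : ℕ, 0 < m ∧ β = fun _ => (m : ℤ)

/-- A convex preorder on `Φ₊`: reflexive, transitive, total, convex, and with mutual
comparability exactly for equal or both-imaginary roots. -/
structure ConvexPreorderOn (e : ℕ) where
  rel : (ZMod e → ℤ) → (ZMod e → ℤ) → Prop
  refl : ∀ β ∈ PhiPos e, rel β β
  trans : ∀ β γ ν, β ∈ PhiPos e → γ ∈ PhiPos e → ν ∈ PhiPos e →
    rel β γ → rel γ ν → rel β ν
  total : ∀ β γ, β ∈ PhiPos e → γ ∈ PhiPos e → rel β γ ∨ rel γ β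
  convex : ∀ β γ, β ∈ PhiPos e → γ ∈ PhiPos e → rel β γ → β + γ ∈ PhiPos e →
    rel β (β + γ) ∧ rel (β + γ) γ
  imag_equiv : ∀ β γ, β ∈ PhiPos e → γ ∈ PhiPos e →
    ((rel β γ ∧ rel γ β) ↔ (β = γ ∨ (ImaginaryRoot e β ∧ ImaginaryRoot e γ)))

/-- The strict relation `β ≻ γ` associated to a convex preorder. -/
def GtRel {e : ℕ} (P : ConvexPreorderOn e) (β γ : ZMod e → ℤ) : Prop :=
  P.rel β γ ∧ ¬ P.rel γ β

/-- The relation `<*` on residues `[0, e−1]`: for `i < j`, `i <* j` iff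
`α(i+1, j−i) ∈ Φ_{≻δ}`, and `j <* i` iff `δ − α(i+1, j−i) ∈ Φ_{≻δ}`. -/
def ltStar (e : ℕ) (P : ConvexPreorderOn e) (i j : ℕ) : Prop :=
  (i < j ∧ GtRel P (alphaRoot e ((i : ℤ) + 1) (j - i)) (deltaRoot e)) ∨
  (j < i ∧ GtRel P (deltaRoot e - alphaRoot e ((j : ℤ) + 1) (i - j)) (deltaRoot e))


/- auxiliary lemmas -/


lemma alphaRoot_congr {e : ℕ} {t t' : ℤ} (h : ((t : ZMod e)) = (t' : ZMod e)) (L : ℕ) :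
    alphaRoot e t L = alphaRoot e t' L := by
  funext j
  unfold alphaRoot
  have : (Finset.range L).filter (fun k : ℕ => ((t + (k : ℤ) : ℤ) : ZMod e) = j)
      = (Finset.range L).filter (fun k : ℕ => ((t' + (k : ℤ) : ℤ) : ZMod e) = j) := by
    apply Finset.filter_congr
    intro k _
    simp only [Int.cast_add, h]
  rw [this]

lemma alphaRoot_zero {e : ℕ} (t : ℤ) : alphaRoot e t 0 = 0 := by
  funext j; simp [alphaRoot]

lemma alphaRoot_one {e : ℕ} (t : ℤ) (j : ZMod e) :
    alphaRoot e t 1 j = if ((t : ZMod e) = j) then 1 else 0 := by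
  simp only [alphaRoot, Finset.range_one, Finset.filter_singleton, Nat.cast_zero, add_zero]
  split <;> simp

lemma alphaRoot_succ {e : ℕ} (t : ℤ) (L : ℕ) :
    alphaRoot e t (L+1) = alphaRoot e t L + alphaRoot e (t + L) 1 := by
  funext j
  show ((((Finset.range (L+1)).filter
      (fun k : ℕ => ((t + (k : ℤ) : ℤ) : ZMod e) = j)).card : ℤ)) = _
  rw [Finset.range_add_one, Finset.filter_insert]
  rw [Pi.add_apply, alphaRoot_one]
  by_cases h : (((t + ((L:ℕ):ℤ)) : ℤ) : ZMod e) = j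
  · rw [if_pos h, if_pos (by exact_mod_cast h), Finset.card_insert_of_notMem (by simp)]
    show ((_ + 1 : ℕ) : ℤ) = _
    rw [Nat.cast_add, Nat.cast_one]
    rfl
  · rw [if_neg h, if_neg (by exact_mod_cast h), add_zero]
    rfl

lemma alphaRoot_add {e : ℕ} (t : ℤ) (L M : ℕ) :
    alphaRoot e t (L + M) = alphaRoot e t L + alphaRoot e (t + L) M := by
  induction M with
  | zero => simp [alphaRoot_zero]
  | succ M ih =>
      rw [← Nat.add_assoc, alphaRoot_succ, ih, alphaRoot_succ (t + L) M]
      push_cast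
      rw [add_assoc, add_assoc]

lemma alphaRoot_e {e : ℕ} (he : 0 < e) (t : ℤ) : alphaRoot e t e = deltaRoot e := by
  haveI : NeZero e := ⟨he.ne'⟩
  funext j
  show ((((Finset.range e).filter
      (fun k : ℕ => ((t + (k : ℤ) : ℤ) : ZMod e) = j)).card : ℤ)) = 1
  norm_num
  rw [Finset.card_eq_one]
  refine ⟨(j - (t : ZMod e)).val, ?_⟩
  ext k
  simp only [Finset.mem_filter, Finset.mem_range, Finset.mem_singleton]
  constructor
  · rintro ⟨hk, hk2⟩
    have : ((k : ℕ) : ZMod e) = j - (t : ZMod e) := by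
      linear_combination hk2
    rw [← this, ZMod.val_cast_of_lt hk]
  · rintro rfl
    refine ⟨ZMod.val_lt _, ?_⟩
    rw [ZMod.natCast_val, ZMod.cast_id]
    ring

lemma alphaRoot_end_eq_zero {e : ℕ} {L : ℕ} (hL : L < e) (t : ℤ) :
    alphaRoot e t L (((t + L : ℤ) : ZMod e)) = 0 := by
  haveI : NeZero e := ⟨by omega⟩
  show ((((Finset.range L).filter _).card : ℤ)) = 0
  norm_num
  intro k hk hc
  have h2 : ((k : ℕ) : ZMod e) = ((L : ℕ) : ZMod e) := by
    linear_combination hc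
  have := congrArg ZMod.val h2
  rw [ZMod.val_cast_of_lt (hk.trans hL), ZMod.val_cast_of_lt hL] at this
  omega

lemma alphaRoot_mem {e : ℕ} (t : ℤ) {L : ℕ} (hL : 0 < L) :
    alphaRoot e t L ∈ PhiPos e := ⟨t, L, hL, rfl⟩

lemma deltaRoot_mem {e : ℕ} (he : 0 < e) : deltaRoot e ∈ PhiPos e :=
  ⟨0, e, he, (alphaRoot_e he 0).symm⟩

lemma alphaRoot_not_imaginary {e : ℕ} (t : ℤ) {L : ℕ} (hL : L < e) :
    ¬ ImaginaryRoot e (alphaRoot e t L) := by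
  rintro ⟨m, hm, hfun⟩
  have h0 := alphaRoot_end_eq_zero hL t
  rw [hfun] at h0
  simp at h0
  omega

lemma alphaRoot_ne_delta {e : ℕ} (t : ℤ) {L : ℕ} (hL : L < e) :
    alphaRoot e t L ≠ deltaRoot e := by
  intro h
  have h0 := alphaRoot_end_eq_zero hL t
  rw [h] at h0
  simp [deltaRoot] at h0

lemma delta_sub_alphaRoot {e : ℕ} (he : 0 < e) (t : ℤ) {L : ℕ} (hL : L ≤ e) :
    deltaRoot e - alphaRoot e t L = alphaRoot e (t + L) (e - L) := by
  have h := alphaRoot_add (e := e) t L (e - L)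
  rw [Nat.add_sub_cancel' hL] at h
  rw [alphaRoot_e he t] at h
  rw [h]; abel

lemma alphaRoot_add_e {e : ℕ} (he : 0 < e) (t : ℤ) (L : ℕ) :
    alphaRoot e t (L + e) = alphaRoot e t L + deltaRoot e := by
  rw [alphaRoot_add, alphaRoot_e he]

/- ### order lemmas -/

section
variable {e : ℕ} (P : ConvexPreorderOn e)

lemma Gd_add {β γ : ZMod e → ℤ} (hδ : deltaRoot e ∈ PhiPos e)
    (hβ : β ∈ PhiPos e) (hγ : γ ∈ PhiPos e) (hs : β + γ ∈ PhiPos e)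
    (h1 : GtRel P β (deltaRoot e)) (h2 : GtRel P γ (deltaRoot e)) :
    GtRel P (β + γ) (deltaRoot e) := by
  rcases P.total β γ hβ hγ with h | h
  · obtain ⟨_, hbg⟩ := P.convex β γ hβ hγ h hs
    exact ⟨P.trans _ _ _ hs hγ hδ hbg h2.1, fun hc => h2.2 (P.trans _ _ _ hδ hs hγ hc hbg)⟩
  · obtain ⟨_, hbg⟩ := P.convex γ β hγ hβ h (by rwa [add_comm])
    rw [add_comm γ β] at hbg
    exact ⟨P.trans _ _ _ hs hβ hδ hbg h1.1, fun hc => h1.2 (P.trans _ _ _ hδ hs hβ hc hbg)⟩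

lemma Gd_delta_false (h : GtRel P (deltaRoot e) (deltaRoot e)) : False := h.2 h.1

lemma Gd_strip {β : ZMod e → ℤ} (hδ : deltaRoot e ∈ PhiPos e)
    (hβ : β ∈ PhiPos e) (hs : β + deltaRoot e ∈ PhiPos e)
    (h : GtRel P (β + deltaRoot e) (deltaRoot e)) : GtRel P β (deltaRoot e) := by
  by_contra hc
  have hrel : P.rel (deltaRoot e) β := by
    rcases P.total β (deltaRoot e) hβ hδ with h' | h'
    · by_contra h''; exact hc ⟨h', h''⟩
    · exact h'
  obtain ⟨h1, _⟩ := P.convex (deltaRoot e) β hδ hβ hrel (by rwa [add_comm])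
  rw [add_comm] at h1
  exact h.2 h1

lemma Gd_dichotomy {β γ : ZMod e → ℤ} (hδ : deltaRoot e ∈ PhiPos e)
    (hβ : β ∈ PhiPos e) (hγ : γ ∈ PhiPos e)
    (hβδ : β ≠ deltaRoot e) (hβi : ¬ ImaginaryRoot e β)
    (hγδ : γ ≠ deltaRoot e) (hγi : ¬ ImaginaryRoot e γ)
    (hsum : β + γ = deltaRoot e) :
    GtRel P β (deltaRoot e) ↔ ¬ GtRel P γ (deltaRoot e) := by
  constructor
  · intro h1 h2
    have h3 := Gd_add P hδ hβ hγ (hsum ▸ hδ) h1 h2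
    rw [hsum] at h3
    exact Gd_delta_false P h3
  · intro h2
    have hdg : P.rel (deltaRoot e) γ := by
      rcases P.total γ (deltaRoot e) hγ hδ with h' | h'
      · by_contra h''; exact h2 ⟨h', h''⟩
      · exact h'
    rcases P.total β γ hβ hγ with h | h
    · obtain ⟨h1, _⟩ := P.convex β γ hβ hγ h (hsum ▸ hδ)
      rw [hsum] at h1
      refine ⟨h1, fun hc => ?_⟩
      rcases (P.imag_equiv β (deltaRoot e) hβ hδ).mp ⟨h1, hc⟩ with h' | ⟨h', _⟩
      · exact hβδ h'
      · exact hβi h'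
    · obtain ⟨_, h1⟩ := P.convex γ β hγ hβ h (by rw [add_comm, hsum]; exact hδ)
      obtain ⟨h1', _⟩ := P.convex γ β hγ hβ h (by rw [add_comm, hsum]; exact hδ)
      rw [add_comm, hsum] at h1'
      rcases (P.imag_equiv γ (deltaRoot e) hγ hδ).mp ⟨h1', hdg⟩ with h' | ⟨h', _⟩
      · exact (hγδ h').elim
      · exact (hγi h').elim

/-- master combination step -/
lemma Gd_step (he : 1 < e) {s s' : ℤ} {L M : ℕ}
    (hL : 0 < L) (hLe : L < e) (hM : 0 < M) (hMe : M < e)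
    (hs' : ((s' : ZMod e)) = (((s + L : ℤ)) : ZMod e))
    (h1 : GtRel P (alphaRoot e s L) (deltaRoot e))
    (h2 : GtRel P (alphaRoot e s' M) (deltaRoot e)) :
    (L + M < e → GtRel P (alphaRoot e s (L + M)) (deltaRoot e)) ∧
    (L + M = e → False) ∧
    (e < L + M → GtRel P (alphaRoot e s (L + M - e)) (deltaRoot e)) := by
  have he0 : 0 < e := by omega
  have hδ : deltaRoot e ∈ PhiPos e := deltaRoot_mem he0
  rw [alphaRoot_congr hs' M] at h2
  have hadd : alphaRoot e s L + alphaRoot e (s + L) M = alphaRoot e s (L + M) :=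
    (alphaRoot_add s L M).symm
  have hGd : GtRel P (alphaRoot e s (L + M)) (deltaRoot e) := by
    rw [← hadd]
    exact Gd_add P hδ (alphaRoot_mem _ hL) (alphaRoot_mem _ hM)
      (hadd ▸ alphaRoot_mem s (by omega)) h1 h2
  refine ⟨fun _ => hGd, fun hE => ?_, fun hE => ?_⟩
  · rw [hE, alphaRoot_e he0] at hGd
    exact Gd_delta_false P hGd
  · have hsplit : L + M = (L + M - e) + e := by omega
    rw [hsplit, alphaRoot_add_e he0] at hGd
    exact Gd_strip P hδ (alphaRoot_mem _ (by omega))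
      (by rw [← alphaRoot_add_e he0]; exact alphaRoot_mem _ (by omega)) hGd

end

/- ### residue-level helpers -/

lemma cast_start (a b : ℕ) (hab : a ≤ b) :
    ((a : ℤ) + 1) + ((b - a : ℕ) : ℤ) = (b : ℤ) + 1 := by
  push_cast [Nat.cast_sub hab]
  ring

/-- reformulate the "reverse" root as an alphaRoot starting at `b+1` -/
lemma delta_sub_seg {e : ℕ} {a b : ℕ} (hab : a < b) (hb : b < e) :
    deltaRoot e - alphaRoot e ((a : ℤ) + 1) (b - a)
      = alphaRoot e ((b : ℤ) + 1) (e - (b - a)) := by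
  rw [delta_sub_alphaRoot (e := e) (by omega) ((a : ℤ) + 1) (L := b - a) (by omega)]
  exact alphaRoot_congr (by rw [cast_start a b hab.le]) _


/-- `<*` is a strict total order on `[0, e−1]`: irreflexive, transitive, and for
distinct residues exactly one of `i <* j`, `j <* i` holds. -/
theorem statement8 (e : ℕ) (he : 1 < e) (P : ConvexPreorderOn e) :
    (∀ i : ℕ, i < e → ¬ ltStar e P i i) ∧
    (∀ i j k : ℕ, i < e → j < e → k < e →
      ltStar e P i j → ltStar e P j k → ltStar e P i k) ∧
    (∀ i j : ℕ, i < e → j < e → i ≠ j → (ltStar e P i j ↔ ¬ ltStar e P j i)) := by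
  have he0 : 0 < e := by omega
  have hδ : deltaRoot e ∈ PhiPos e := deltaRoot_mem he0
  -- trichotomy for i < j
  have tri : ∀ i j : ℕ, i < j → j < e → (ltStar e P i j ↔ ¬ ltStar e P j i) := by
    intro i j hij hj
    have hL1 : 0 < j - i := by omega
    have hL2 : j - i < e := by omega
    have hiff1 : ltStar e P i j ↔ GtRel P (alphaRoot e ((i : ℤ) + 1) (j - i)) (deltaRoot e) := by
      unfold ltStar
      constructor
      · rintro (⟨_, h⟩ | ⟨h, _⟩)
        · exact h
        · omega
      · intro h; exact Or.inl ⟨hij, h⟩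
    have hiff2 : ltStar e P j i ↔
        GtRel P (deltaRoot e - alphaRoot e ((i : ℤ) + 1) (j - i)) (deltaRoot e) := by
      unfold ltStar
      constructor
      · rintro (⟨h, _⟩ | ⟨_, h⟩)
        · omega
        · exact h
      · intro h; exact Or.inr ⟨hij, h⟩
    rw [hiff1, hiff2]
    have hrw := delta_sub_seg (e := e) hij hj
    apply Gd_dichotomy P hδ (alphaRoot_mem _ hL1)
      (by rw [hrw]; exact alphaRoot_mem _ (by omega))
      (alphaRoot_ne_delta _ hL2) (alphaRoot_not_imaginary _ hL2)
      (by rw [hrw]; exact alphaRoot_ne_delta _ (by omega))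
      (by rw [hrw]; exact alphaRoot_not_imaginary _ (by omega))
    abel
  refine ⟨?_, ?_, ?_⟩
  · intro i _ h
    rcases h with ⟨h, _⟩ | ⟨h, _⟩ <;> omega
  · -- transitivity
    intro i j k hi hj hk h1 h2
    -- turn hypotheses into Gd statements about alphaRoots starting right
    rcases h1 with ⟨hij, g1⟩ | ⟨hji, g1⟩ <;> rcases h2 with ⟨hjk, g2⟩ | ⟨hkj, g2⟩
    · -- i<j, j<k : lengths j-i, k-j
      have g2' : GtRel P (alphaRoot e ((j : ℤ) + 1) (k - j)) (deltaRoot e) := g2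
      have step := Gd_step P he (s := (i : ℤ) + 1) (s' := (j : ℤ) + 1)
        (L := j - i) (M := k - j)
        (hL := by omega) (hLe := by omega)
        (hM := by omega) (hMe := by omega)
        (hs' := by rw [cast_start i j hij.le]) g1 g2'
      have hik : i < k := hij.trans hjk
      refine Or.inl ⟨hik, ?_⟩
      have := step.1 (by omega)
      rwa [show (j - i) + (k - j) = k - i by omega] at this
    · -- i<j, k<j
      rw [delta_sub_seg hkj hj] at g2
      have step := Gd_step P he (s := (i : ℤ) + 1) (s' := (j : ℤ) + 1)
        (L := j - i) (M := e - (j - k))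
        (hL := by omega) (hLe := by omega)
        (hM := by omega) (hMe := by omega)
        (hs' := by rw [cast_start i j hij.le]) g1 g2
      rcases lt_trichotomy i k with hik | rfl | hki
      · refine Or.inl ⟨hik, ?_⟩
        have := step.2.2 (by omega)
        rwa [show (j - i) + (e - (j - k)) - e = k - i by omega] at this
      · exact absurd (step.2.1 (by omega)) (by simp)
      · refine Or.inr ⟨hki, ?_⟩
        have := step.1 (by omega)
        rw [show (j - i) + (e - (j - k)) = e - (i - k) by omega] at this
        rwa [delta_sub_seg hki hi]
    · -- j<i, j<k
      rw [delta_sub_seg hji hi] at g1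
      have step := Gd_step P he (s := (i : ℤ) + 1) (s' := (j : ℤ) + 1)
        (L := e - (i - j)) (M := k - j)
        (hL := by omega) (hLe := by omega)
        (hM := by omega) (hMe := by omega)
        (hs' := ?_) g1 g2
      · rcases lt_trichotomy i k with hik | rfl | hki
        · refine Or.inl ⟨hik, ?_⟩
          have := step.2.2 (by omega)
          rwa [show (e - (i - j)) + (k - j) - e = k - i by omega] at this
        · exact absurd (step.2.1 (by omega)) (by simp)
        · refine Or.inr ⟨hki, ?_⟩
          have := step.1 (by omega)
          rw [show (e - (i - j)) + (k - j) = e - (i - k) by omega] at this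
          rwa [delta_sub_seg hki hi]
      · -- (j+1 : ZMod e) = (i+1) + (e - (i-j))
        push_cast [Nat.cast_sub (show i - j ≤ e by omega), Nat.cast_sub (show j ≤ i by omega)]
        simp [ZMod.natCast_self]
        ring
    · -- j<i, k<j : k<i
      rw [delta_sub_seg hji hi] at g1
      rw [delta_sub_seg hkj hj] at g2
      have hki : k < i := hkj.trans hji
      have step := Gd_step P he (s := (i : ℤ) + 1) (s' := (j : ℤ) + 1)
        (L := e - (i - j)) (M := e - (j - k))
        (hL := by omega) (hLe := by omega)
        (hM := by omega) (hMe := by omega)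
        (hs' := ?_) g1 g2
      · refine Or.inr ⟨hki, ?_⟩
        have := step.2.2 (by omega)
        rw [show (e - (i - j)) + (e - (j - k)) - e = e - (i - k) by omega] at this
        rwa [delta_sub_seg hki hi]
      · push_cast [Nat.cast_sub (show i - j ≤ e by omega), Nat.cast_sub (show j ≤ i by omega)]
        simp [ZMod.natCast_self]
        ring
  · intro i j hi hj hne
    rcases lt_or_gt_of_ne hne with h | h
    · exact tri i j h hj
    · exact iff_not_comm.mp (tri j i h hi)
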